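/- arXiv:1410.0780 — 5 statements merged into one kernel-verified Lean document; each statement's English description precedes it below -/
import Mathlib

section
/- For all real numbers x ≥ α ≥ 1, the incomplete Gamma integral satisfies ∫_x^∞ r^{α-1} e^{-r} dr ≤ 2^{α+1} x^α e^{-x} / α. -/
open Real MeasureTheory

theorem incomplete_gamma_bound (x α : ℝ) (hα : 1 ≤ α) (hx : α ≤ x) :
    ∫ r in Set.Ioi x, r ^ (α - 1) * Real.exp (-r) ≤
      2 ^ (α + 1) * x ^ α * Real.exp (-x) / α := by
  have hα0 : (0:ℝ) < α := by linarith
  have hx0 : (0:ℝ) < x := by linarith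
  set C : ℝ := x ^ (α - 1) * Real.exp (-(x - x / α)) with hC
  have hC0 : 0 ≤ C := by positivity
  -- integral of the exponential majorant
  have hintexp : IntegrableOn (fun r : ℝ => Real.exp (-α⁻¹ * r)) (Set.Ioi x) :=
    exp_neg_integrableOn_Ioi x (inv_pos.mpr hα0)
  have hIexp : ∫ r in Set.Ioi x, Real.exp (-α⁻¹ * r) = α * Real.exp (-α⁻¹ * x) := by
    have hderiv : ∀ r ∈ Set.Ici x,
        HasDerivAt (fun r : ℝ => -α * Real.exp (-α⁻¹ * r)) (Real.exp (-α⁻¹ * r)) r := by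
      intro r _
      have h1 : HasDerivAt (fun r : ℝ => -α⁻¹ * r) (-α⁻¹) r := by
        simpa using (hasDerivAt_id r).const_mul (-α⁻¹)
      have h2 := (h1.exp).const_mul (-α)
      refine h2.congr_deriv ?_
      linear_combination (Real.exp (-α⁻¹ * r)) * mul_inv_cancel₀ hα0.ne'
    have htend : Filter.Tendsto (fun r : ℝ => -α * Real.exp (-α⁻¹ * r)) Filter.atTop (nhds 0) := by
      have h1 : Filter.Tendsto (fun r : ℝ => α⁻¹ * r) Filter.atTop Filter.atTop :=
        Filter.Tendsto.const_mul_atTop (inv_pos.mpr hα0) Filter.tendsto_id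
      have h2 : Filter.Tendsto (fun r : ℝ => Real.exp (-α⁻¹ * r)) Filter.atTop (nhds 0) :=
        (Real.tendsto_exp_neg_atTop_nhds_zero.comp h1).congr fun r => by
          simp [Function.comp, neg_mul]
      simpa using h2.const_mul (-α)
    rw [integral_Ioi_of_hasDerivAt_of_tendsto' hderiv hintexp htend]
    ring
  have hint : IntegrableOn (fun r : ℝ => C * Real.exp (-α⁻¹ * r)) (Set.Ioi x) :=
    hintexp.const_mul C
  -- pointwise bound
  have hmaj : ∀ r ∈ Set.Ioi x,
      r ^ (α - 1) * Real.exp (-r) ≤ C * Real.exp (-α⁻¹ * r) := by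
    intro r hr
    have hrx : x < r := hr
    have hr0 : 0 < r := lt_trans hx0 hrx
    have hL : Real.log r - Real.log x ≤ (r - x) / x := by
      rw [← Real.log_div hr0.ne' hx0.ne']
      have h := Real.log_le_sub_one_of_pos (div_pos hr0 hx0)
      have : r / x - 1 = (r - x) / x := by field_simp
      linarith [h, this.ge, this.le]
    have h1 : (α - 1) * (Real.log r - Real.log x) ≤ (α - 1) * ((r - x) / x) :=
      mul_le_mul_of_nonneg_left hL (by linarith)
    have h2 : (α - 1) * ((r - x) / x) ≤ (α - 1) * ((r - x) / α) := by
      have hd : (r - x) / x ≤ (r - x) / α :=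
        div_le_div_of_nonneg_left (by linarith) hα0 hx
      exact mul_le_mul_of_nonneg_left hd (by linarith)
    have h3 : (α - 1) * ((r - x) / α) = (1 - α⁻¹) * (r - x) := by
      field_simp
    have hkey : (α - 1) * Real.log r + -r ≤
        (α - 1) * Real.log x + -(x - x / α) + -α⁻¹ * r := by
      have hxα : x / α = α⁻¹ * x := by ring
      nlinarith [h1, h2, h3.le, h3.ge]
    calc r ^ (α - 1) * Real.exp (-r)
        = Real.exp ((α - 1) * Real.log r + -r) := by
          rw [Real.rpow_def_of_pos hr0, ← Real.exp_add]; ring_nf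
      _ ≤ Real.exp ((α - 1) * Real.log x + -(x - x / α) + -α⁻¹ * r) :=
          Real.exp_le_exp.mpr hkey
      _ = C * Real.exp (-α⁻¹ * r) := by
          rw [hC, Real.rpow_def_of_pos hx0, ← Real.exp_add, ← Real.exp_add]; ring_nf
  have hnonneg : ∀ r ∈ Set.Ioi x, 0 ≤ r ^ (α - 1) * Real.exp (-r) := by
    intro r hr
    have hr0 : 0 < r := lt_trans hx0 hr
    positivity
  have hstep : ∫ r in Set.Ioi x, r ^ (α - 1) * Real.exp (-r)
      ≤ ∫ r in Set.Ioi x, C * Real.exp (-α⁻¹ * r) := by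
    apply integral_mono_of_nonneg
    · filter_upwards [ae_restrict_mem measurableSet_Ioi] with r hr using hnonneg r hr
    · exact hint
    · filter_upwards [ae_restrict_mem measurableSet_Ioi] with r hr using hmaj r hr
  have hval : ∫ r in Set.Ioi x, C * Real.exp (-α⁻¹ * r) = α * x ^ (α - 1) * Real.exp (-x) := by
    have he : Real.exp (-(x - x / α)) * Real.exp (-α⁻¹ * x) = Real.exp (-x) := by
      rw [← Real.exp_add]; congr 1; rw [div_eq_inv_mul]; ring
    rw [integral_const_mul, hIexp, hC,
      show x ^ (α - 1) * Real.exp (-(x - x / α)) * (α * Real.exp (-α⁻¹ * x)) =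
        α * x ^ (α - 1) * (Real.exp (-(x - x / α)) * Real.exp (-α⁻¹ * x)) from by ring, he]
  have hfin : α * x ^ (α - 1) * Real.exp (-x) ≤ 2 ^ (α + 1) * x ^ α * Real.exp (-x) / α := by
    rw [le_div_iff₀ hα0]
    have hbern : 1 + α ≤ (2:ℝ) ^ α := by
      have := one_add_mul_self_le_rpow_one_add (by norm_num : (-1:ℝ) ≤ 1) hα
      norm_num at this
      linarith
    have h2a : (2:ℝ) ^ (α + 1) = 2 * 2 ^ α := by
      rw [Real.rpow_add (by norm_num : (0:ℝ) < 2), Real.rpow_one]; ring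
    have hxa : x ^ α = x ^ (α - 1) * x := by
      rw [← Real.rpow_add_one hx0.ne' (α - 1)]; norm_num
    have hp : (0:ℝ) < x ^ (α - 1) * Real.exp (-x) := by positivity
    have hcoef : α * α ≤ 2 ^ (α + 1) * x := by
      have h1 : (2:ℝ) * (1 + α) * α ≤ 2 * 2 ^ α * x := by
        nlinarith
      nlinarith [h2a.le, h2a.ge]
    calc α * x ^ (α - 1) * Real.exp (-x) * α
        = (α * α) * (x ^ (α - 1) * Real.exp (-x)) := by ring
      _ ≤ (2 ^ (α + 1) * x) * (x ^ (α - 1) * Real.exp (-x)) := by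
          exact mul_le_mul_of_nonneg_right hcoef hp.le
      _ = 2 ^ (α + 1) * x ^ α * Real.exp (-x) := by rw [hxa]; ring
  calc ∫ r in Set.Ioi x, r ^ (α - 1) * Real.exp (-r)
      ≤ ∫ r in Set.Ioi x, C * Real.exp (-α⁻¹ * r) := hstep
    _ = α * x ^ (α - 1) * Real.exp (-x) := hval
    _ ≤ 2 ^ (α + 1) * x ^ α * Real.exp (-x) / α := hfin
end

section
/- Let X be a random vector in ℝⁿ with characteristic function φ_X(ξ) = E[exp(i⟨ξ,X⟩)], and let K be a bounded symmetric star-shaped set (unit ball of a quasi-norm ‖·‖). Then for every t > 0, P(‖X‖ ≤ t) ≤ vol(K) · (t/(2π))ⁿ · ∫_{ℝⁿ} |φ_X(ξ)| dξ. -/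
open MeasureTheory Real ProbabilityTheory
open scoped FourierTransform RealInnerProductSpace SchwartzMap Manifold Pointwise

noncomputable def schwartzOfCompactSupport {n : ℕ} (g : EuclideanSpace ℝ (Fin n) → ℝ)
    (hg : ContDiff ℝ ((⊤ : ℕ∞) : WithTop ℕ∞) g) (hsupp : HasCompactSupport g) :
    SchwartzMap (EuclideanSpace ℝ (Fin n)) ℂ where
  toFun x := (g x : ℂ)
  smooth' := Complex.ofRealCLM.contDiff.comp hg
  decay' := by
    intro k m
    have hc : Continuous fun x => ‖x‖ ^ k * ‖iteratedFDeriv ℝ m g x‖ := by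
      exact (continuous_norm.pow k).mul ((hg.continuous_iteratedFDeriv (mod_cast le_top)).norm)
    have hcs : HasCompactSupport fun x : EuclideanSpace ℝ (Fin n) =>
        ‖x‖ ^ k * ‖iteratedFDeriv ℝ m g x‖ := by
      exact ((hsupp.iteratedFDeriv m).norm).mul_left
    obtain ⟨C, hC⟩ := hc.bounded_above_of_compact_support hcs
    refine ⟨C, fun x => ?_⟩
    have : ‖iteratedFDeriv ℝ m (fun x => ((g x : ℂ))) x‖ = ‖iteratedFDeriv ℝ m g x‖ := by
      have := Complex.ofRealLI.norm_iteratedFDeriv_comp_left (f := g) (x := x) hg.contDiffAt (i := m) (mod_cast le_top)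
      exact this
    rw [this]
    exact (le_abs_self _).trans ((Real.norm_eq_abs _) ▸ hC x)

lemma key_ineq {n : ℕ} {Ω : Type*} [MeasureSpace Ω] (μ : Measure Ω) [IsProbabilityMeasure μ]
    (X : Ω → EuclideanSpace ℝ (Fin n)) (hX : Measurable X)
    (φ : EuclideanSpace ℝ (Fin n) → ℂ)
    (hφ : ∀ ξ, φ ξ = ∫ ω, Complex.exp (Complex.I * ((inner ℝ ξ (X ω) : ℝ) : ℂ)) ∂μ)
    (hint : Integrable fun ξ : EuclideanSpace ℝ (Fin n) => ‖φ ξ‖)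
    (g : EuclideanSpace ℝ (Fin n) → ℝ) (hg : ContDiff ℝ ((⊤ : ℕ∞) : WithTop ℕ∞) g)
    (hsupp : HasCompactSupport g) (hnn : ∀ x, 0 ≤ g x) :
    ∫ ω, g (X ω) ∂μ ≤ (∫ x, g x) * (((2 * π) ^ n)⁻¹ * ∫ ξ, ‖φ ξ‖) := by
  classical
  set gc : EuclideanSpace ℝ (Fin n) → ℂ := fun x => ((g x : ℂ)) with hgcdef
  have hSco : ⇑(schwartzOfCompactSupport g hg hsupp) = gc := rfl
  have hgc_int : Integrable gc := by
    rw [← hSco]; exact (schwartzOfCompactSupport g hg hsupp).integrable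
  have hFeq : 𝓕 gc = ⇑(SchwartzMap.fourierTransformCLM ℂ (schwartzOfCompactSupport g hg hsupp)) := by
    rw [SchwartzMap.fourierTransformCLM_apply, SchwartzMap.fourier_coe, hSco]
  have hFint : Integrable (𝓕 gc) := by
    rw [hFeq]; exact (SchwartzMap.fourierTransformCLM ℂ (schwartzOfCompactSupport g hg hsupp)).integrable
  have hFcont : Continuous (𝓕 gc) := by
    rw [hFeq]; exact (SchwartzMap.fourierTransformCLM ℂ (schwartzOfCompactSupport g hg hsupp)).continuous
  set h : EuclideanSpace ℝ (Fin n) → ℂ := 𝓕 gc with hdef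
  have hgccont : Continuous gc := Complex.continuous_ofReal.comp hg.continuous
  have hinv : ∀ x : EuclideanSpace ℝ (Fin n), gc x = ∫ ξ : EuclideanSpace ℝ (Fin n), Complex.exp ((2 * π * ⟪ξ, x⟫ : ℝ) * Complex.I) * h ξ := by
    intro x
    have H := hgccont.fourierInv_fourier_eq hgc_int hFint
    have : gc x = 𝓕⁻ h x := by rw [hdef, H]
    rw [this, Real.fourierInv_eq']
    simp only [Circle.smul_def, smul_eq_mul]
  set F : Ω → EuclideanSpace ℝ (Fin n) → ℂ :=
    fun ω ξ => Complex.exp ((2 * π * ⟪ξ, X ω⟫ : ℝ) * Complex.I) * h ξ with hFdef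
  have hnorm1 : ∀ (r : ℝ), ‖Complex.exp ((r : ℂ) * Complex.I)‖ = 1 := by
    intro r
    rw [Complex.norm_exp_ofReal_mul_I]
  have hFnorm : ∀ ω ξ, ‖F ω ξ‖ = ‖h ξ‖ := by
    intro ω ξ
    rw [hFdef]
    simp only [norm_mul]
    rw [hnorm1]
    ring
  have hFm : AEStronglyMeasurable (Function.uncurry F) (μ.prod volume) := by
    apply Measurable.aestronglyMeasurable
    apply Measurable.mul
    · apply Complex.measurable_exp.comp
      apply Measurable.mul_const
      apply Complex.measurable_ofReal.comp
      exact (measurable_const.mul (Measurable.inner (𝕜 := ℝ) measurable_snd (hX.comp measurable_fst)))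
    · exact hFcont.measurable.comp measurable_snd
  have hFIξ : ∀ ω, Integrable (fun ξ => F ω ξ) volume := by
    intro ω
    apply hFint.bdd_mul
    · apply Measurable.aestronglyMeasurable
      apply Complex.measurable_exp.comp
      apply Measurable.mul_const
      apply Complex.measurable_ofReal.comp
      exact measurable_const.mul (Measurable.inner (𝕜 := ℝ) measurable_id (measurable_const (a := X ω)))
    · exact Filter.Eventually.of_forall fun ξ => le_of_eq (hnorm1 _)
  have hprod : Integrable (Function.uncurry F) (μ.prod volume) := by
    rw [integrable_prod_iff hFm]
    constructor
    · exact Filter.Eventually.of_forall hFIξ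
    · have : (fun ω => ∫ ξ, ‖Function.uncurry F (ω, ξ)‖) = fun _ => ∫ ξ, ‖h ξ‖ := by
        funext ω
        exact integral_congr_ae (Filter.Eventually.of_forall fun ξ => hFnorm ω ξ)
      rw [this]
      exact integrable_const _
  have key : ∫ ω, gc (X ω) ∂μ = ∫ ξ, φ ((2 * π) • ξ) * h ξ := by
    calc ∫ ω, gc (X ω) ∂μ = ∫ ω, ∫ ξ, F ω ξ ∂volume ∂μ := by
          apply integral_congr_ae
          exact Filter.Eventually.of_forall fun ω => hinv (X ω)
      _ = ∫ ξ, ∫ ω, F ω ξ ∂μ ∂volume := integral_integral_swap hprod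
      _ = ∫ ξ, φ ((2 * π) • ξ) * h ξ := by
          apply integral_congr_ae
          apply Filter.Eventually.of_forall
          intro ξ
          show ∫ ω, F ω ξ ∂μ = φ ((2 * π) • ξ) * h ξ
          have e1 : ∫ ω, F ω ξ ∂μ
              = (∫ ω, Complex.exp ((2 * π * ⟪ξ, X ω⟫ : ℝ) * Complex.I) ∂μ) * h ξ := by
            have e0 : ∫ ω, F ω ξ ∂μ
                = ∫ ω, Complex.exp (((2 * π * ⟪ξ, X ω⟫ : ℝ) : ℂ) * Complex.I) • h ξ ∂μ :=
              integral_congr_ae (Filter.Eventually.of_forall fun ω => by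
                simp [hFdef, smul_eq_mul])
            rw [e0, integral_smul_const, smul_eq_mul]
          rw [e1]
          congr 1
          rw [hφ ((2 * π) • ξ)]
          apply integral_congr_ae
          apply Filter.Eventually.of_forall
          intro ω
          show Complex.exp ((2 * π * ⟪ξ, X ω⟫ : ℝ) * Complex.I)
              = Complex.exp (Complex.I * ((inner ℝ ((2 * π) • ξ) (X ω) : ℝ) : ℂ))
          rw [real_inner_smul_left, mul_comm]
  set B : ℝ := ∫ x, g x with hBdef
  have hBnn : 0 ≤ B := integral_nonneg hnn
  have hre : (∫ ω, gc (X ω) ∂μ) = ((∫ ω, g (X ω) ∂μ : ℝ) : ℂ) := integral_ofReal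
  have hncg : (∫ x, ‖gc x‖) = B := by
    rw [hBdef]
    apply integral_congr_ae
    apply Filter.Eventually.of_forall
    intro x
    simp only [hgcdef, Complex.norm_real, Real.norm_eq_abs]
    exact abs_of_nonneg (hnn x)
  have hhb : ∀ ξ, ‖h ξ‖ ≤ B := by
    intro ξ
    have h0 := VectorFourier.norm_fourierIntegral_le_integral_norm Real.fourierChar volume
      (innerₗ (EuclideanSpace ℝ (Fin n))) gc ξ
    rw [hncg] at h0
    exact h0
  have h2pi : (2 * π) ≠ 0 := by positivity
  have hφb : Integrable (fun ξ : EuclideanSpace ℝ (Fin n) => ‖φ ((2 * π) • ξ)‖) :=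
    hint.comp_smul h2pi
  have hmono : (∫ ω, g (X ω) ∂μ) ≤ ∫ ξ, ‖φ ((2 * π) • ξ)‖ * B := by
    have h1 : (∫ ω, g (X ω) ∂μ) ≤ ‖∫ ξ, φ ((2 * π) • ξ) * h ξ‖ := by
      have : (∫ ω, g (X ω) ∂μ) = (∫ ξ, φ ((2 * π) • ξ) * h ξ).re := by
        rw [← key, hre, Complex.ofReal_re]
      rw [this]
      exact Complex.re_le_norm _
    have h2 : ‖∫ ξ, φ ((2 * π) • ξ) * h ξ‖ ≤ ∫ ξ, ‖φ ((2 * π) • ξ) * h ξ‖ :=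
      norm_integral_le_integral_norm _
    have h3 : ∫ ξ, ‖φ ((2 * π) • ξ) * h ξ‖ ≤ ∫ ξ, ‖φ ((2 * π) • ξ)‖ * B := by
      apply integral_mono_of_nonneg
      · exact Filter.Eventually.of_forall fun ξ => norm_nonneg _
      · exact hφb.mul_const B
      · apply Filter.Eventually.of_forall
        intro ξ
        show ‖φ ((2 * π) • ξ) * h ξ‖ ≤ ‖φ ((2 * π) • ξ)‖ * B
        rw [norm_mul]
        exact mul_le_mul_of_nonneg_left (hhb ξ) (norm_nonneg _)
    linarith
  have hcv : (∫ ξ : EuclideanSpace ℝ (Fin n), ‖φ ((2 * π) • ξ)‖)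
      = ((2 * π) ^ n)⁻¹ * ∫ ξ, ‖φ ξ‖ := by
    have h4 := MeasureTheory.Measure.integral_comp_smul
      (volume : Measure (EuclideanSpace ℝ (Fin n))) (fun ξ => ‖φ ξ‖) (2 * π)
    rw [finrank_euclideanSpace_fin] at h4
    rw [h4, smul_eq_mul, abs_of_nonneg (by positivity)]
  calc ∫ ω, g (X ω) ∂μ ≤ ∫ ξ, ‖φ ((2 * π) • ξ)‖ * B := hmono
    _ = (∫ ξ, ‖φ ((2 * π) • ξ)‖) * B := integral_mul_const _ _
    _ = B * (((2 * π) ^ n)⁻¹ * ∫ ξ, ‖φ ξ‖) := by rw [hcv]; ring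


/-- Small ball estimate via the characteristic function: if `N` is a quasi-norm on `ℝⁿ`
(homogeneous) whose unit ball `K = {x | N x ≤ 1}` is bounded and measurable, then
`P(N(X) ≤ t) ≤ vol(K) (t/(2π))ⁿ ∫ |φ_X|`. -/
theorem small_ball_char_fun (n : ℕ) {Ω : Type*} [MeasureSpace Ω]
    (μ : Measure Ω) [IsProbabilityMeasure μ]
    (X : Ω → EuclideanSpace ℝ (Fin n)) (hX : Measurable X)
    (N : EuclideanSpace ℝ (Fin n) → ℝ)
    (hhom : ∀ (c : ℝ) (x : EuclideanSpace ℝ (Fin n)), N (c • x) = |c| * N x)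
    (hpos : ∀ x, 0 ≤ N x)
    (hKbdd : Bornology.IsBounded {x : EuclideanSpace ℝ (Fin n) | N x ≤ 1})
    (hKmeas : MeasurableSet {x : EuclideanSpace ℝ (Fin n) | N x ≤ 1})
    (φ : EuclideanSpace ℝ (Fin n) → ℂ)
    (hφ : ∀ ξ, φ ξ = ∫ ω, Complex.exp (Complex.I * ((inner ℝ ξ (X ω) : ℝ) : ℂ)) ∂μ)
    (hint : Integrable fun ξ : EuclideanSpace ℝ (Fin n) => ‖φ ξ‖)
    (t : ℝ) (ht : 0 < t) :
    (μ {ω | N (X ω) ≤ t}).toReal ≤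
      (volume {x : EuclideanSpace ℝ (Fin n) | N x ≤ 1}).toReal * (t / (2 * π)) ^ n *
        ∫ ξ : EuclideanSpace ℝ (Fin n), ‖φ ξ‖ := by
  classical
  have hπ : (0:ℝ) < 2 * π := by positivity
  set M : ℝ := ∫ ξ : EuclideanSpace ℝ (Fin n), ‖φ ξ‖ with hM
  have hMnn : 0 ≤ M := integral_nonneg fun _ => norm_nonneg _
  set c : ℝ := ((2 * π) ^ n)⁻¹ * M with hc
  have hcnn : 0 ≤ c := by positivity
  set K := {x : EuclideanSpace ℝ (Fin n) | N x ≤ 1} with hK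
  set tK := {x : EuclideanSpace ℝ (Fin n) | N x ≤ t} with htK
  have hiff : ∀ x : EuclideanSpace ℝ (Fin n), N (t⁻¹ • x) ≤ 1 ↔ N x ≤ t := by
    intro x
    rw [hhom, abs_of_nonneg (inv_nonneg.2 ht.le), inv_mul_le_iff₀ ht, mul_one]
  have htK_pre : tK = (fun x : EuclideanSpace ℝ (Fin n) => t⁻¹ • x) ⁻¹' K := by
    ext x
    simp only [Set.mem_preimage, Set.mem_setOf_eq, htK, hK]
    exact (hiff x).symm
  have htK_meas : MeasurableSet tK := by
    rw [htK_pre]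
    exact (measurable_const_smul t⁻¹) hKmeas
  have htK_smul : tK = t • K := by
    ext x
    rw [Set.mem_smul_set_iff_inv_smul_mem₀ ht.ne']
    simp only [Set.mem_setOf_eq, htK, hK]
    exact (hiff x).symm
  have hvolK_fin : volume K ≠ ⊤ := hKbdd.measure_lt_top.ne
  have hvol_tK : volume tK = ENNReal.ofReal (t ^ n) * volume K := by
    rw [htK_smul, Measure.addHaar_smul, finrank_euclideanSpace_fin, abs_of_pos (pow_pos ht n)]
  have htK_bdd : Bornology.IsBounded tK := by
    rw [htK_smul]
    exact hKbdd.smul₀ t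
  have hvol_tK_fin : volume tK ≠ ⊤ := htK_bdd.measure_lt_top.ne
  set ν := μ.map X with hν
  haveI : IsProbabilityMeasure ν := Measure.isProbabilityMeasure_map hX.aemeasurable
  have hμtk : μ {ω | N (X ω) ≤ t} = ν tK := by
    rw [hν, Measure.map_apply hX htK_meas]
    rfl
  have main : ∀ ε : ℝ, 0 < ε → (ν tK).toReal ≤ (volume tK).toReal * c + (ε * c + ε) := by
    intro ε hε
    have hεE : (ENNReal.ofReal ε) ≠ 0 := (ENNReal.ofReal_pos.2 hε).ne'
    obtain ⟨U0, hU0sub, hU0open, hU0vol⟩ := tK.exists_isOpen_lt_add hvol_tK_fin hεE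
    obtain ⟨R, hRsub⟩ := htK_bdd.subset_ball (0 : EuclideanSpace ℝ (Fin n))
    set U := U0 ∩ Metric.ball (0 : EuclideanSpace ℝ (Fin n)) (|R| + 1) with hU
    have hUopen : IsOpen U := hU0open.inter Metric.isOpen_ball
    have htKU : tK ⊆ U :=
      Set.subset_inter hU0sub (hRsub.trans (Metric.ball_subset_ball (by linarith [le_abs_self R])))
    have hUvol_lt : volume U < volume tK + ENNReal.ofReal ε :=
      lt_of_le_of_lt (measure_mono Set.inter_subset_left) hU0vol
    have hUfin : volume U ≠ ⊤ :=
      (lt_of_le_of_lt (measure_mono Set.inter_subset_right) measure_ball_lt_top).ne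
    obtain ⟨C, hCsub, hCcomp, hCν⟩ :=
      htK_meas.exists_isCompact_lt_add (μ := ν) (measure_ne_top ν tK) hεE
    have hCU : C ⊆ U := hCsub.trans htKU
    obtain ⟨f, hf0, hf1, hf01⟩ :=
      exists_contMDiffMap_zero_one_of_isClosed 𝓘(ℝ, EuclideanSpace ℝ (Fin n)) (n := (⊤ : ℕ∞))
        (isClosed_compl_iff.2 hUopen) hCcomp.isClosed
        (Set.disjoint_left.mpr fun a ha hc => ha (hCU hc))
    have hfsmooth : ContDiff ℝ ((⊤ : ℕ∞) : WithTop ℕ∞) ⇑f := by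
      have := f.contMDiff
      rw [contMDiff_iff_contDiff] at this
      exact this
    have hfnn : ∀ x, 0 ≤ f x := fun x => (hf01 x).1
    have hfle : ∀ x, f x ≤ 1 := fun x => (hf01 x).2
    have hsupp_sub : Function.support ⇑f ⊆ U := by
      intro x hx
      by_contra hxU
      exact hx (hf0 hxU)
    have hfsupp : HasCompactSupport ⇑f := by
      apply IsCompact.of_isClosed_subset
        (isCompact_closedBall (0 : EuclideanSpace ℝ (Fin n)) (|R| + 1))
        (isClosed_closure)
      refine (closure_mono (hsupp_sub.trans Set.inter_subset_right)).trans ?_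
      rw [closure_ball (0 : EuclideanSpace ℝ (Fin n)) (by positivity : |R| + 1 ≠ 0)]
    have hkey := key_ineq μ X hX φ hφ hint ⇑f hfsmooth hfsupp hfnn
    -- ν C ≤ ∫ f ∘ X dμ
    have hfXint : Integrable (fun ω => f (X ω)) μ := by
      apply Integrable.mono' (integrable_const (1 : ℝ))
      · exact (hfsmooth.continuous.measurable.comp hX).aestronglyMeasurable
      · exact Filter.Eventually.of_forall fun ω => by
          rw [Real.norm_eq_abs, abs_of_nonneg (hfnn _)]
          exact hfle _
    have hνC : (ν C).toReal ≤ ∫ ω, f (X ω) ∂μ := by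
      have e1 : (ν C).toReal = ∫ ω, (X ⁻¹' C).indicator (fun _ => (1:ℝ)) ω ∂μ := by
        rw [integral_indicator_const (1:ℝ) (hCcomp.isClosed.measurableSet.preimage hX),
          smul_eq_mul, mul_one, hν, Measure.map_apply hX hCcomp.isClosed.measurableSet, measureReal_def]
      rw [e1]
      apply integral_mono _ hfXint
      · intro ω
        by_cases hω : ω ∈ X ⁻¹' C
        · rw [Set.indicator_of_mem hω]
          exact le_of_eq (hf1 hω).symm
        · rw [Set.indicator_of_notMem hω]
          exact hfnn _
      · exact (integrable_const (1:ℝ)).indicator (hCcomp.isClosed.measurableSet.preimage hX)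
    -- ∫ f ≤ vol U
    have hfvol : (∫ x, f x) ≤ (volume U).toReal := by
      have e2 : (∫ x, U.indicator (fun _ => (1:ℝ)) x) = (volume U).toReal := by
        rw [integral_indicator_const (1:ℝ) hUopen.measurableSet, smul_eq_mul, mul_one, measureReal_def]
      rw [← e2]
      apply integral_mono (hfsmooth.continuous.integrable_of_hasCompactSupport hfsupp) _
      · intro x
        by_cases hx : x ∈ U
        · rw [Set.indicator_of_mem hx]
          exact hfle _
        · rw [Set.indicator_of_notMem hx]
          exact le_of_eq (hf0 hx)
      · exact (integrable_indicator_iff hUopen.measurableSet).2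
          (integrableOn_const hUfin)
    -- chain
    have s1 : (ν tK).toReal ≤ (ν C).toReal + ε := by
      have : ν tK ≤ ν C + ENNReal.ofReal ε := hCν.le
      have h2 := ENNReal.toReal_mono (by
        exact ENNReal.add_ne_top.2 ⟨measure_ne_top ν C, ENNReal.ofReal_ne_top⟩) this
      rwa [ENNReal.toReal_add (measure_ne_top ν C) ENNReal.ofReal_ne_top,
        ENNReal.toReal_ofReal hε.le] at h2
    have s2 : (volume U).toReal ≤ (volume tK).toReal + ε := by
      have h2 := ENNReal.toReal_mono (by
        exact ENNReal.add_ne_top.2 ⟨hvol_tK_fin, ENNReal.ofReal_ne_top⟩) hUvol_lt.le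
      rwa [ENNReal.toReal_add hvol_tK_fin ENNReal.ofReal_ne_top,
        ENNReal.toReal_ofReal hε.le] at h2
    have s3 : (∫ x, f x) * c ≤ ((volume tK).toReal + ε) * c :=
      mul_le_mul_of_nonneg_right (hfvol.trans s2) hcnn
    calc (ν tK).toReal ≤ (ν C).toReal + ε := s1
      _ ≤ (∫ ω, f (X ω) ∂μ) + ε := by linarith
      _ ≤ (∫ x, f x) * c + ε := by
          rw [hc]
          linarith [hkey]
      _ ≤ ((volume tK).toReal + ε) * c + ε := by linarith
      _ = (volume tK).toReal * c + (ε * c + ε) := by ring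
  have hfinal : (ν tK).toReal ≤ (volume tK).toReal * c := by
    apply le_of_forall_pos_le_add
    intro δ hδ
    have hcd : 0 < c + 1 := by linarith
    have := main (δ / (c + 1)) (by positivity)
    have e : δ / (c + 1) * c + δ / (c + 1) = δ := by
      field_simp
    linarith [this, e]
  rw [hμtk]
  refine hfinal.trans (le_of_eq ?_)
  rw [hvol_tK, ENNReal.toReal_mul, ENNReal.toReal_ofReal (by positivity : (0:ℝ) ≤ t ^ n)]
  rw [hc, div_pow, div_eq_mul_inv]
  ring
end

section
/- For real numbers β > 0, p ∈ [1,2], t > 0 with p t² ≤ 2, and a positive integer n with βp ≥ n: ∫_0^∞ r^{n-1} min(1, r^{-βp}) e^{-p t² r²/2} dr ≤ log(2e/(p t²)). -/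
open Real MeasureTheory Set Filter Topology

lemma exp_neg_le_quad {x : ℝ} (hx : 0 ≤ x) : Real.exp (-x) ≤ 1 - x + x ^ 2 / 2 := by
  have hderiv : ∀ y : ℝ, HasDerivAt (fun y : ℝ => 1 - y + y ^ 2 / 2 - Real.exp (-y))
      (-1 + y + Real.exp (-y)) y := by
    intro y
    have h1 : HasDerivAt (fun y : ℝ => -y) (-1 : ℝ) y := by
      exact (hasDerivAt_id' y).neg
    have h1' : HasDerivAt (fun y : ℝ => Real.exp (-y)) (Real.exp (-y) * (-1)) y := h1.exp
    have h2 : HasDerivAt (fun y : ℝ => 1 - y + y ^ 2 / 2) (-1 + y) y := by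
      have := ((hasDerivAt_const y (1:ℝ)).sub (hasDerivAt_id y)).add
        ((hasDerivAt_pow 2 y).div_const 2)
      convert this using 1
      · rfl
      · rfl
      · rfl
      simp
    have := h2.sub h1'
    convert this using 1
    · rfl
    · rfl
    · rfl
    ring
  have key : MonotoneOn (fun y : ℝ => 1 - y + y ^ 2 / 2 - Real.exp (-y)) (Set.Ici 0) := by
    apply monotoneOn_of_deriv_nonneg (convex_Ici 0)
    · exact Continuous.continuousOn (by continuity)
    · intro y _
      exact (hderiv y).differentiableAt.differentiableWithinAt
    · intro y _
      rw [(hderiv y).deriv]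
      have := Real.add_one_le_exp (-y)
      linarith
  have h0 := key Set.self_mem_Ici hx hx
  norm_num at h0
  linarith

set_option maxHeartbeats 1000000 in
theorem integral_bound_beta_p_large (β p t : ℝ) (n : ℕ) (hβ : 0 < β) (hp : 1 ≤ p)
    (hp2 : p ≤ 2) (ht : 0 < t) (hpt : p * t ^ 2 ≤ 2) (hn : 0 < n)
    (hβp : (n : ℝ) ≤ β * p) :
    ∫ r in Set.Ioi (0 : ℝ),
        r ^ (n - 1) * min 1 (r ^ (-(β * p))) * Real.exp (-p * t ^ 2 * r ^ 2 / 2) ≤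
      Real.log (2 * Real.exp 1 / (p * t ^ 2)) := by
  have hp0 : (0:ℝ) < p := lt_of_lt_of_le one_pos hp
  set a : ℝ := p * t ^ 2 / 2 with ha_def
  have ha0 : 0 < a := by rw [ha_def]; positivity
  have ha1 : a ≤ 1 := by rw [ha_def]; linarith
  set R : ℝ := (Real.sqrt a)⁻¹ with hR_def
  have hsqrt_pos : 0 < Real.sqrt a := Real.sqrt_pos.mpr ha0
  have hR0 : 0 < R := by rw [hR_def]; positivity
  have hR1 : 1 ≤ R := by
    rw [hR_def]
    exact one_le_inv_iff₀.mpr ⟨hsqrt_pos, Real.sqrt_le_one.mpr ha1⟩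
  have haR2 : a * R ^ 2 = 1 := by
    rw [hR_def, inv_pow, Real.sq_sqrt ha0.le]
    field_simp
  have hpt2 : p * t ^ 2 = 2 * a := by rw [ha_def]; ring
  clear_value a R
  set g : ℝ → ℝ := fun r => min 1 r⁻¹ * Real.exp (-(a * r ^ 2)) with hg_def
  have hg_meas : Measurable g := by
    apply (measurable_const.min measurable_inv).mul
    exact (Real.continuous_exp.comp ((continuous_const.mul (continuous_pow 2)).neg)).measurable
  have hg_nonneg : ∀ r : ℝ, 0 < r → 0 ≤ g r := fun r hr =>
    mul_nonneg (le_min zero_le_one (by positivity)) (Real.exp_pos _).le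
  have hg_le_exp : ∀ r : ℝ, g r ≤ Real.exp (-(a * r ^ 2)) := fun r => by
    calc g r ≤ 1 * Real.exp (-(a * r ^ 2)) :=
          mul_le_mul_of_nonneg_right (min_le_left _ _) (Real.exp_pos _).le
      _ = _ := one_mul _
  -- integrability
  have hg_int1 : IntegrableOn g (Set.Ioc (0:ℝ) 1) := by
    apply Measure.integrableOn_of_bounded (M := 1) measure_Ioc_lt_top.ne
      hg_meas.aestronglyMeasurable
    filter_upwards [ae_restrict_mem measurableSet_Ioc] with r hr
    rw [Real.norm_eq_abs, abs_of_nonneg (hg_nonneg r hr.1)]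
    calc g r ≤ Real.exp (-(a * r ^ 2)) := hg_le_exp r
      _ ≤ 1 := Real.exp_le_one_iff.mpr (by nlinarith [sq_nonneg r])
  have hg_intIoi1 : IntegrableOn g (Set.Ioi (1:ℝ)) := by
    apply Integrable.mono ((integrable_exp_neg_mul_sq ha0).integrableOn
      (s := Set.Ioi (1:ℝ))) hg_meas.aestronglyMeasurable
    filter_upwards [ae_restrict_mem measurableSet_Ioi] with r hr
    rw [Real.norm_eq_abs, abs_of_nonneg (hg_nonneg r (lt_trans one_pos hr)),
      Real.norm_eq_abs, abs_of_nonneg (Real.exp_pos _).le, neg_mul]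
    exact hg_le_exp r
  have hg_int2 : IntegrableOn g (Set.Ioc (1:ℝ) R) :=
    hg_intIoi1.mono_set Set.Ioc_subset_Ioi_self
  have hg_int3 : IntegrableOn g (Set.Ioi R) :=
    hg_intIoi1.mono_set (Set.Ioi_subset_Ioi hR1)
  have hg_int : IntegrableOn g (Set.Ioi (0:ℝ)) := by
    rw [← Set.Ioc_union_Ioi_eq_Ioi (zero_le_one (α := ℝ))]
    exact hg_int1.union hg_intIoi1
  -- step 1 : compare to g
  have step1 : (∫ r in Set.Ioi (0 : ℝ),
      r ^ (n - 1) * min 1 (r ^ (-(β * p))) * Real.exp (-p * t ^ 2 * r ^ 2 / 2)) ≤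
      ∫ r in Set.Ioi (0:ℝ), g r := by
    apply integral_mono_of_nonneg ?_ hg_int ?_
    · filter_upwards [ae_restrict_mem measurableSet_Ioi] with r hr
      exact mul_nonneg (mul_nonneg (pow_nonneg (le_of_lt hr) _)
        (le_min zero_le_one (Real.rpow_nonneg (le_of_lt hr) _))) (Real.exp_pos _).le
    · filter_upwards [ae_restrict_mem measurableSet_Ioi] with r hr
      have hr0 : (0:ℝ) < r := hr
      have hexp : Real.exp (-p * t ^ 2 * r ^ 2 / 2) = Real.exp (-(a * r ^ 2)) := by
        congr 1
        linear_combination (-(r ^ 2) / 2) * hpt2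
      rw [hexp]
      have key : r ^ (n - 1) * min 1 (r ^ (-(β * p))) ≤ min 1 r⁻¹ := by
        rcases le_or_gt r 1 with h1 | h1
        · have hm : min 1 r⁻¹ = 1 := min_eq_left (one_le_inv₀ hr0 |>.mpr h1)
          rw [hm]
          have h2 : r ^ (n - 1) ≤ 1 := pow_le_one₀ hr0.le h1
          have h3 : min 1 (r ^ (-(β * p))) ≤ 1 := min_le_left _ _
          calc r ^ (n - 1) * min 1 (r ^ (-(β * p))) ≤ 1 * 1 :=
                mul_le_mul h2 h3 (le_min zero_le_one (Real.rpow_nonneg hr0.le _))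
                  zero_le_one
            _ = 1 := one_mul 1
        · have h1' : (1:ℝ) ≤ r := h1.le
          have hm : min 1 r⁻¹ = r⁻¹ := min_eq_right (inv_le_one_of_one_le₀ h1')
          rw [hm]
          calc r ^ (n - 1) * min 1 (r ^ (-(β * p)))
              ≤ r ^ (n - 1) * r ^ (-(β * p)) :=
                mul_le_mul_of_nonneg_left (min_le_right _ _) (pow_nonneg hr0.le _)
            _ = r ^ (((n:ℝ) - 1) + -(β * p)) := by
                rw [← Real.rpow_natCast r (n - 1), ← Real.rpow_add hr0]
                congr 2
                push_cast [Nat.cast_sub hn]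
                ring
            _ ≤ r ^ (-1 : ℝ) := Real.rpow_le_rpow_of_exponent_le h1' (by linarith)
            _ = r⁻¹ := Real.rpow_neg_one r
      exact mul_le_mul_of_nonneg_right key (Real.exp_pos _).le
  -- splitting
  have hsplit1 : ∫ r in Set.Ioi (0:ℝ), g r =
      (∫ r in Set.Ioc (0:ℝ) 1, g r) + ∫ r in Set.Ioi (1:ℝ), g r := by
    rw [← setIntegral_union (Set.Ioc_disjoint_Ioi le_rfl) measurableSet_Ioi hg_int1
      hg_intIoi1, Set.Ioc_union_Ioi_eq_Ioi (zero_le_one (α := ℝ))]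
  have hsplit2 : ∫ r in Set.Ioi (1:ℝ), g r =
      (∫ r in Set.Ioc (1:ℝ) R, g r) + ∫ r in Set.Ioi R, g r := by
    rw [← setIntegral_union (Set.Ioc_disjoint_Ioi le_rfl) measurableSet_Ioi hg_int2
      hg_int3, Set.Ioc_union_Ioi_eq_Ioi hR1]
  -- piece 1
  have hA1 : ∫ r in Set.Ioc (0:ℝ) 1, g r ≤ 1 - a / 3 + a ^ 2 / 10 := by
    have hpoly_cont : Continuous (fun r : ℝ => 1 - a * r ^ 2 + (a * r ^ 2) ^ 2 / 2) :=
      (continuous_const.sub (continuous_const.mul (continuous_pow 2))).add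
        (((continuous_const.mul (continuous_pow 2)).pow 2).div_const 2)
    have hstep : ∫ r in Set.Ioc (0:ℝ) 1, g r ≤
        ∫ r in Set.Ioc (0:ℝ) 1, (1 - a * r ^ 2 + (a * r ^ 2) ^ 2 / 2) := by
      apply setIntegral_mono_on hg_int1 (hpoly_cont.integrableOn_Ioc) measurableSet_Ioc
      intro r hr
      exact (hg_le_exp r).trans (exp_neg_le_quad (by positivity))
    refine hstep.trans (le_of_eq ?_)
    rw [← intervalIntegral.integral_of_le (zero_le_one (α := ℝ))]
    have hrw : ∀ r : ℝ, 1 - a * r ^ 2 + (a * r ^ 2) ^ 2 / 2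
        = 1 - a * r ^ 2 + a ^ 2 / 2 * r ^ 4 := fun r => by ring
    simp_rw [hrw]
    rw [intervalIntegral.integral_add (f := fun x => 1 - a * x ^ 2) (g := fun x => a ^ 2 / 2 * x ^ 4) (((continuous_const.sub
        (continuous_const.mul (continuous_pow 2))).intervalIntegrable 0 1))
        ((continuous_const.mul (continuous_pow 4)).intervalIntegrable 0 1),
      intervalIntegral.integral_sub (f := fun _ => 1) (g := fun x => a * x ^ 2) (intervalIntegrable_const)
        ((continuous_const.mul (continuous_pow 2)).intervalIntegrable 0 1),
      intervalIntegral.integral_const_mul, intervalIntegral.integral_const_mul,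
      integral_pow, integral_pow, intervalIntegral.integral_const]
    norm_num
    ring
  -- piece 2
  have hA2 : ∫ r in Set.Ioc (1:ℝ) R, g r ≤ Real.log R := by
    have hinv_cont : ContinuousOn (fun r : ℝ => r⁻¹) (Set.Icc (1:ℝ) R) := by
      apply ContinuousOn.inv₀ continuousOn_id
      intro x hx
      exact ne_of_gt (lt_of_lt_of_le one_pos hx.1)
    have hinv_int : IntegrableOn (fun r : ℝ => r⁻¹) (Set.Ioc (1:ℝ) R) :=
      (hinv_cont.integrableOn_Icc).mono_set Set.Ioc_subset_Icc_self
    have hstep : ∫ r in Set.Ioc (1:ℝ) R, g r ≤ ∫ r in Set.Ioc (1:ℝ) R, r⁻¹ := by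
      apply setIntegral_mono_on hg_int2 hinv_int measurableSet_Ioc
      intro r hr
      have hr0 : (0:ℝ) < r := lt_of_lt_of_le one_pos hr.1.le
      calc g r ≤ r⁻¹ * Real.exp (-(a * r ^ 2)) :=
            mul_le_mul_of_nonneg_right (min_le_right _ _) (Real.exp_pos _).le
        _ ≤ r⁻¹ * 1 := mul_le_mul_of_nonneg_left
            (Real.exp_le_one_iff.mpr (by nlinarith [sq_nonneg r])) (by positivity)
        _ = r⁻¹ := mul_one _
    refine hstep.trans (le_of_eq ?_)
    rw [← intervalIntegral.integral_of_le hR1, integral_inv]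
    · rw [div_one]
    · rw [Set.uIcc_of_le hR1]
      rintro ⟨h0, -⟩
      linarith
  -- piece 3
  have hF_deriv : ∀ x : ℝ, HasDerivAt (fun r : ℝ => -Real.exp (-(a * r ^ 2)) / 2)
      (a * x * Real.exp (-(a * x ^ 2))) x := by
    intro x
    have h1 : HasDerivAt (fun r : ℝ => -(a * r ^ 2)) (-(a * (2 * x))) x := by
      have h : HasDerivAt (fun r : ℝ => a * r ^ 2) (a * (2 * x)) x := by
        have := (hasDerivAt_pow 2 x).const_mul a
        simpa using this
      exact h.neg
    have h2 := h1.exp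
    have h3 := h2.neg.div_const 2
    convert h3 using 1
    · rfl
    · rfl
    · rfl
    ring
  have hF_tendsto : Tendsto (fun r : ℝ => -Real.exp (-(a * r ^ 2)) / 2) atTop (𝓝 0) := by
    have h1 : Tendsto (fun r : ℝ => a * r ^ 2) atTop atTop :=
      (tendsto_pow_atTop two_ne_zero).const_mul_atTop ha0
    have h2 : Tendsto (fun r : ℝ => -(a * r ^ 2)) atTop atBot :=
      tendsto_neg_atBot_iff.mpr h1
    have h3 : Tendsto (fun r : ℝ => Real.exp (-(a * r ^ 2))) atTop (𝓝 0) :=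
      Real.tendsto_exp_atBot.comp h2
    have := h3.neg.div_const 2
    simpa using this
  have hderiv_int : IntegrableOn (fun r : ℝ => a * r * Real.exp (-(a * r ^ 2)))
      (Set.Ioi R) := by
    apply integrableOn_Ioi_deriv_of_nonneg
      (hF_deriv R).continuousAt.continuousWithinAt (fun x _ => hF_deriv x)
      (fun x hx => mul_nonneg (mul_nonneg ha0.le (hR0.trans hx).le) (Real.exp_pos _).le) hF_tendsto
  have hA3eq : ∫ r in Set.Ioi R, a * r * Real.exp (-(a * r ^ 2)) = Real.exp (-1) / 2 := by
    rw [integral_Ioi_of_hasDerivAt_of_tendsto (hF_deriv R).continuousAt.continuousWithinAt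
      (fun x _ => hF_deriv x) hderiv_int hF_tendsto]
    rw [haR2]
    ring
  have hA3 : ∫ r in Set.Ioi R, g r ≤ Real.exp (-1) / 2 := by
    rw [← hA3eq]
    apply setIntegral_mono_on hg_int3 hderiv_int measurableSet_Ioi
    intro r hr
    have hrR : R < r := hr
    have hr0 : 0 < r := hR0.trans hrR
    have h1 : r⁻¹ ≤ a * r := by
      rw [inv_eq_one_div, div_le_iff₀ hr0]
      nlinarith [haR2, mul_nonneg (mul_nonneg ha0.le (sub_nonneg.mpr hrR.le))
        (by linarith : (0:ℝ) ≤ r + R)]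
    calc g r ≤ r⁻¹ * Real.exp (-(a * r ^ 2)) :=
          mul_le_mul_of_nonneg_right (min_le_right _ _) (Real.exp_pos _).le
      _ ≤ a * r * Real.exp (-(a * r ^ 2)) :=
          mul_le_mul_of_nonneg_right h1 (Real.exp_pos _).le
  -- conclusion
  have hRHS : Real.log (2 * Real.exp 1 / (p * t ^ 2)) = 1 - Real.log a := by
    rw [hpt2, show (2:ℝ) * Real.exp 1 / (2 * a) = Real.exp 1 / a by
        rw [mul_div_mul_left _ _ (two_ne_zero)],
      Real.log_div (Real.exp_ne_zero 1) ha0.ne', Real.log_exp]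
  have hlogR : Real.log R = -(Real.log a / 2) := by
    rw [hR_def, Real.log_inv, Real.log_sqrt ha0.le]
  have hloga : Real.log a ≤ a - 1 := Real.log_le_sub_one_of_pos ha0
  have hE : Real.exp (-1) ≤ 0.368 := by
    have h1 : Real.exp (-1) * Real.exp 1 = 1 := by
      rw [← Real.exp_add]; norm_num
    nlinarith [Real.exp_one_gt_d9, Real.exp_pos (-1)]
  calc (∫ r in Set.Ioi (0 : ℝ),
      r ^ (n - 1) * min 1 (r ^ (-(β * p))) * Real.exp (-p * t ^ 2 * r ^ 2 / 2))
      ≤ ∫ r in Set.Ioi (0:ℝ), g r := step1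
    _ = (∫ r in Set.Ioc (0:ℝ) 1, g r) + ((∫ r in Set.Ioc (1:ℝ) R, g r)
        + ∫ r in Set.Ioi R, g r) := by rw [hsplit1, hsplit2]
    _ ≤ (1 - a / 3 + a ^ 2 / 10) + (Real.log R + Real.exp (-1) / 2) :=
        add_le_add hA1 (add_le_add hA2 hA3)
    _ ≤ Real.log (2 * Real.exp 1 / (p * t ^ 2)) := by
        rw [hRHS, hlogR]
        nlinarith [mul_nonneg (sub_nonneg.mpr ha1) ha0.le]
end

section
/- For p ≥ 1, t > 0 with p t² ≥ n and a positive integer n ≥ 2: ∫_0^1 r^{n-1} e^{-p t² r²/2} dr ≤ ((n/(p t²)) · log(e p t²/n))^{n/2}. -/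
open Real MeasureTheory

set_option maxHeartbeats 1000000

theorem integral_bound_pt_large (p t : ℝ) (n : ℕ) (hp : 1 ≤ p) (ht : 0 < t)
    (hn : 2 ≤ n) (hpt : (n : ℝ) ≤ p * t ^ 2) :
    ∫ r in Set.Icc (0 : ℝ) 1, r ^ (n - 1) * Real.exp (-p * t ^ 2 * r ^ 2 / 2) ≤
      (((n : ℝ) / (p * t ^ 2)) * Real.log (Real.exp 1 * p * t ^ 2 / n)) ^ ((n : ℝ) / 2) := by
  have hnR : (2:ℝ) ≤ (n:ℝ) := by exact_mod_cast hn
  have hnpos : (0:ℝ) < n := by linarith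
  set a : ℝ := p * t ^ 2 with ha_def
  have hapos : 0 < a := by positivity
  have hna : (n:ℝ) ≤ a := hpt
  have hanpos : 0 < a / n := by positivity
  have hL : Real.log (Real.exp 1 * p * t ^ 2 / n) = 1 + Real.log (a / n) := by
    rw [show Real.exp 1 * p * t ^ 2 / n = Real.exp 1 * (a / n) by rw [ha_def]; ring,
      Real.log_mul (Real.exp_ne_zero 1) (ne_of_gt hanpos), Real.log_exp]
  set L := Real.log (Real.exp 1 * p * t ^ 2 / n) with hLdef
  have hL1 : 1 ≤ L := by
    rw [hL]
    have : 0 ≤ Real.log (a / n) :=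
      Real.log_nonneg (by rw [le_div_iff₀ hnpos]; linarith)
    linarith
  set C : ℝ := (n / a) * L with hC_def
  have hCpos : 0 < C := by
    apply mul_pos (by positivity); linarith
  have hC1 : C ≤ 1 := by
    have hlog : Real.log (a / n) ≤ a / n - 1 := Real.log_le_sub_one_of_pos hanpos
    have hLle : L ≤ a / n := by rw [hL]; linarith
    have h1 : (n / a) * L ≤ (n / a) * (a / n) :=
      mul_le_mul_of_nonneg_left hLle (by positivity)
    have h2 : (n / a) * (a / n) = 1 := by field_simp
    rw [hC_def, ← h2] at *; linarith
  set c : ℝ := Real.sqrt C with hc_def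
  have hc0 : 0 < c := Real.sqrt_pos.mpr hCpos
  have hc1 : c ≤ 1 := Real.sqrt_le_one.mpr hC1
  have hc2 : c ^ 2 = C := Real.sq_sqrt hCpos.le
  -- rewrite RHS as c ^ n
  have hcn : C ^ ((n:ℝ)/2) = c ^ n := by
    rw [show ((n:ℝ)/2) = (1/2) * (n:ℝ) by ring, Real.rpow_mul hCpos.le,
      ← Real.sqrt_eq_rpow, Real.rpow_natCast]
  -- the constant K
  set K : ℝ := Real.exp (-a * c ^ 2 / 2) with hK_def
  have hK0 : 0 < K := Real.exp_pos _
  have haC : a * C = (n:ℝ) * L := by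
    rw [hC_def]; field_simp
  have hKle : K ≤ c ^ n := by
    have hcnK : c ^ n = Real.exp ((n:ℝ) * (Real.log C / 2)) := by
      rw [← Real.log_sqrt hCpos.le, ← hc_def, Real.exp_nat_mul, Real.exp_log hc0]
    rw [hK_def, hc2, hcnK]
    apply Real.exp_le_exp.mpr
    have hlogC : Real.log C = Real.log (n / a) + Real.log L := by
      rw [hC_def, Real.log_mul (by positivity) (by linarith)]
    have hlogna : Real.log ((n:ℝ) / a) = 1 - L := by
      rw [hL, Real.log_div (ne_of_gt hnpos) (ne_of_gt hapos),
        Real.log_div (ne_of_gt hapos) (ne_of_gt hnpos)]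
      ring
    have hlogL : 0 ≤ Real.log L := Real.log_nonneg hL1
    have : -L ≤ Real.log C := by rw [hlogC, hlogna]; linarith
    have h3 : (n:ℝ) * (-L) ≤ (n:ℝ) * Real.log C :=
      mul_le_mul_of_nonneg_left (by linarith) hnpos.le
    linarith [haC, h3]
  -- integrability
  have hcont : Continuous fun r : ℝ => r ^ (n - 1) * Real.exp (-a * r ^ 2 / 2) := by
    fun_prop
  have hint : ∀ u v : ℝ, IntervalIntegrable
      (fun r : ℝ => r ^ (n - 1) * Real.exp (-a * r ^ 2 / 2)) volume u v :=
    fun u v => hcont.intervalIntegrable u v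
  have hn1 : n - 1 + 1 = n := by omega
  have hcast : ((n - 1 : ℕ) : ℝ) + 1 = (n : ℝ) := by
    rw [Nat.cast_sub (by omega : (1:ℕ) ≤ n)]; push_cast; ring
  -- convert to interval integral
  have hIcc : (∫ r in Set.Icc (0 : ℝ) 1, r ^ (n - 1) * Real.exp (-a * r ^ 2 / 2))
      = ∫ r in (0:ℝ)..1, r ^ (n - 1) * Real.exp (-a * r ^ 2 / 2) := by
    rw [MeasureTheory.integral_Icc_eq_integral_Ioc,
      intervalIntegral.integral_of_le (by norm_num : (0:ℝ) ≤ 1)]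
  have hsplit : (∫ r in (0:ℝ)..1, r ^ (n - 1) * Real.exp (-a * r ^ 2 / 2))
      = (∫ r in (0:ℝ)..c, r ^ (n - 1) * Real.exp (-a * r ^ 2 / 2))
      + ∫ r in c..(1:ℝ), r ^ (n - 1) * Real.exp (-a * r ^ 2 / 2) :=
    (intervalIntegral.integral_add_adjacent_intervals (hint 0 c) (hint c 1)).symm
  -- bound first piece
  have hI1 : (∫ r in (0:ℝ)..c, r ^ (n - 1) * Real.exp (-a * r ^ 2 / 2)) ≤ c ^ n / n := by
    have hmono : (∫ r in (0:ℝ)..c, r ^ (n - 1) * Real.exp (-a * r ^ 2 / 2))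
        ≤ ∫ r in (0:ℝ)..c, r ^ (n - 1) := by
      apply intervalIntegral.integral_mono_on hc0.le (hint 0 c)
        ((continuous_pow (n-1)).intervalIntegrable 0 c)
      intro x hx
      have hx0 : 0 ≤ x := hx.1
      have hexp : Real.exp (-a * x ^ 2 / 2) ≤ 1 := by
        apply Real.exp_le_one_iff.mpr; nlinarith
      nlinarith [pow_nonneg hx0 (n-1)]
    have hval : (∫ r in (0:ℝ)..c, r ^ (n - 1)) = c ^ n / n := by
      rw [integral_pow, hn1, hcast, zero_pow (by omega : n ≠ 0)]
      ring
    linarith [hmono, le_of_eq hval]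
  -- bound second piece
  have hI2 : (∫ r in c..(1:ℝ), r ^ (n - 1) * Real.exp (-a * r ^ 2 / 2)) ≤ c ^ n / n := by
    have hmono : (∫ r in c..(1:ℝ), r ^ (n - 1) * Real.exp (-a * r ^ 2 / 2))
        ≤ ∫ r in c..(1:ℝ), r ^ (n - 1) * K := by
      apply intervalIntegral.integral_mono_on hc1 (hint c 1)
        (((continuous_pow (n-1)).mul continuous_const).intervalIntegrable c 1)
      intro x hx
      have hxc : c ≤ x := hx.1
      have hexp : Real.exp (-a * x ^ 2 / 2) ≤ K := by
        rw [hK_def]; apply Real.exp_le_exp.mpr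
        have hx2 : c ^ 2 ≤ x ^ 2 := pow_le_pow_left₀ hc0.le hxc 2
        nlinarith [hapos, hx2]
      exact mul_le_mul_of_nonneg_left hexp (pow_nonneg (le_trans hc0.le hxc) (n-1))
    have hval : (∫ r in c..(1:ℝ), r ^ (n - 1) * K) = (1 - c ^ n) / n * K := by
      rw [intervalIntegral.integral_mul_const, integral_pow, hn1, hcast, one_pow]
    have hcnle1 : c ^ n ≤ 1 := pow_le_one₀ hc0.le hc1
    have hKcn : (1 - c ^ n) / n * K ≤ c ^ n / n := by
      have h1 : (1 - c ^ n) / n * K ≤ 1 / n * K :=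
        mul_le_mul_of_nonneg_right
          ((div_le_div_iff_of_pos_right hnpos).mpr (by linarith [pow_nonneg hc0.le n])) hK0.le
      have h2 : 1 / n * K ≤ 1 / n * c ^ n := by
        apply mul_le_mul_of_nonneg_left hKle (by positivity)
      calc (1 - c ^ n) / n * K ≤ 1 / n * K := h1
        _ ≤ 1 / n * c ^ n := h2
        _ = c ^ n / n := by ring
    linarith [hmono, le_of_eq hval]
  -- conclude
  have hmain : (∫ r in Set.Icc (0 : ℝ) 1, r ^ (n - 1) * Real.exp (-a * r ^ 2 / 2)) ≤ c ^ n := by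
    rw [hIcc, hsplit]
    have hcn0 : 0 ≤ c ^ n := pow_nonneg hc0.le n
    have : c ^ n / n + c ^ n / n ≤ c ^ n := by
      rw [← add_div, div_le_iff₀ hnpos]
      nlinarith
    linarith
  calc (∫ r in Set.Icc (0 : ℝ) 1, r ^ (n - 1) * Real.exp (-p * t ^ 2 * r ^ 2 / 2))
      = ∫ r in Set.Icc (0 : ℝ) 1, r ^ (n - 1) * Real.exp (-a * r ^ 2 / 2) := by
        rw [ha_def]; congr 1; ext r; ring_nf
    _ ≤ c ^ n := hmain
    _ = C ^ ((n:ℝ)/2) := hcn.symm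
end

section
/- For p ≥ 1, t > 0 with 2 ≤ p t² ≤ n and a positive integer n: ∫_0^1 r^{n-1} e^{-p t² r²/2} dr ≤ 2 e^{-p t²/18}. -/
open Real MeasureTheory

theorem integral_bound_pt_medium (p t : ℝ) (n : ℕ) (hp : 1 ≤ p) (ht : 0 < t)
    (hn : 0 < n) (hpt2 : 2 ≤ p * t ^ 2) (hptn : p * t ^ 2 ≤ (n : ℝ)) :
    ∫ r in Set.Icc (0 : ℝ) 1, r ^ (n - 1) * Real.exp (-p * t ^ 2 * r ^ 2 / 2) ≤
      2 * Real.exp (-p * t ^ 2 / 18) := by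
  have ha0 : (0:ℝ) < p * t ^ 2 := by nlinarith
  have key : ∀ x ∈ Set.Icc (0:ℝ) 1,
      x ^ (n - 1) * Real.exp (-p * t ^ 2 * x ^ 2 / 2) ≤ 2 * Real.exp (-p * t ^ 2 / 18) := by
    intro x hx
    obtain ⟨hx0, hx1⟩ := hx
    have hexp_pos : 0 < Real.exp (-p * t ^ 2 / 18) := Real.exp_pos _
    by_cases h : x ≤ 2/3
    · have h1 : x ^ (n - 1) ≤ (2/3 : ℝ) ^ (n - 1) := pow_le_pow_left₀ hx0 h _
      have hb : (2/3 : ℝ) ≤ Real.exp (-(1/18)) := by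
        nlinarith [Real.add_one_le_exp (-(1/18) : ℝ)]
      have h2 : ((2:ℝ)/3) ^ n ≤ Real.exp (-(n:ℝ)/18) := by
        calc ((2:ℝ)/3) ^ n ≤ (Real.exp (-(1/18))) ^ n := pow_le_pow_left₀ (by norm_num) hb _
          _ = Real.exp ((n:ℝ) * (-(1/18))) := (Real.exp_nat_mul _ _).symm
          _ = Real.exp (-(n:ℝ)/18) := by ring_nf
      have h3 : ((2:ℝ)/3) ^ (n-1) ≤ 2 * ((2:ℝ)/3) ^ n := by
        have : ((2:ℝ)/3) ^ n = (2/3) * (2/3) ^ (n-1) := by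
          rw [← pow_succ']
          congr 1
          omega
        rw [this]
        nlinarith [pow_nonneg (by norm_num : (0:ℝ) ≤ 2/3) (n-1)]
      have h4 : Real.exp (-(n:ℝ)/18) ≤ Real.exp (-p * t ^ 2 / 18) :=
        Real.exp_le_exp.mpr (by linarith)
      have h5 : Real.exp (-p * t ^ 2 * x ^ 2 / 2) ≤ 1 := by
        rw [Real.exp_le_one_iff]
        nlinarith [sq_nonneg x]
      have hxp : 0 ≤ x ^ (n-1) := pow_nonneg hx0 _
      calc x ^ (n-1) * Real.exp (-p * t ^ 2 * x ^ 2 / 2) ≤ x ^ (n-1) * 1 := by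
            exact mul_le_mul_of_nonneg_left h5 hxp
        _ = x ^ (n-1) := mul_one _
        _ ≤ (2/3 : ℝ) ^ (n-1) := h1
        _ ≤ 2 * ((2:ℝ)/3) ^ n := h3
        _ ≤ 2 * Real.exp (-(n:ℝ)/18) := by linarith
        _ ≤ 2 * Real.exp (-p * t ^ 2 / 18) := by linarith
    · push_neg at h
      have h1 : x ^ (n - 1) ≤ 1 := pow_le_one₀ hx0 hx1
      have h2 : Real.exp (-p * t ^ 2 * x ^ 2 / 2) ≤ Real.exp (-p * t ^ 2 / 18) := by
        apply Real.exp_le_exp.mpr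
        nlinarith [sq_nonneg x, sq_nonneg (x - 2/3)]
      have he : 0 ≤ Real.exp (-p * t ^ 2 * x ^ 2 / 2) := (Real.exp_pos _).le
      nlinarith
  have hcont : Continuous fun r : ℝ => r ^ (n - 1) * Real.exp (-p * t ^ 2 * r ^ 2 / 2) := by
    fun_prop
  have hint : IntegrableOn (fun r : ℝ => r ^ (n - 1) * Real.exp (-p * t ^ 2 * r ^ 2 / 2))
      (Set.Icc (0:ℝ) 1) := hcont.integrableOn_Icc
  calc ∫ r in Set.Icc (0 : ℝ) 1, r ^ (n - 1) * Real.exp (-p * t ^ 2 * r ^ 2 / 2)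
      ≤ ∫ _ in Set.Icc (0 : ℝ) 1, 2 * Real.exp (-p * t ^ 2 / 18) :=
        setIntegral_mono_on hint ((integrableOn_const_iff).mpr (Or.inr (by simp))) measurableSet_Icc key
    _ = 2 * Real.exp (-p * t ^ 2 / 18) := by
        simp [Real.volume_Icc]
end
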